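/- arXiv:2009.08222 — 2 statements merged into one kernel-verified Lean document; each statement's English description precedes it below -/
import Mathlib

section
/- Let H be a positive integer with Zeckendorf expansion H = F_{m_0} + F_{m_1} + ... + F_{m_k}. If k ≥ 1, then A(H) = a_k·⌊2^{m_k}/6 + (m_k + 1)/2⌋ − ε_k·a_{k−1} + Σ_{i=1}^{k} a_{i−1}·f(t_i)·2^{m_{i−1} − 2t_i}; if k = 0, then A(H) = ⌊2^{m_0}/6 + (m_0 + 1)/2⌋. -/
open scoped BigOperators
open Filter Topology

/-- A natural number is a Fibonacci number, i.e. equals `F m` for some `m ≥ 1`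
(with `F 1 = F 2 = 1`). -/
def IsFibNum (x : ℕ) : Prop := ∃ m : ℕ, 0 < m ∧ Nat.fib m = x

/-- `R n` counts the partitions of `n` into distinct Fibonacci numbers:
the number of finite sets of Fibonacci numbers with sum `n` (so `R 0 = 1`). -/
noncomputable def R (n : ℕ) : ℕ :=
  Nat.card {S : Finset ℕ // (∀ x ∈ S, IsFibNum x) ∧ (∑ x ∈ S, x) = n}

/-- The summatory function `A H = ∑_{n=0}^{H} R n`. -/
noncomputable def A (H : ℕ) : ℕ := ∑ n ∈ Finset.range (H + 1), R n

/-- `f t = 1 + 2(4^{t-1} - 1)/3` (an integer for `t ≥ 1`). -/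
def fInt (t : ℕ) : ℤ := 1 + 2 * (4 ^ (t - 1) - 1) / 3

open Finset in
/-- Number of subsets of `Icc 2 j` whose fib-sum is at most `H`. -/
def D (j : ℕ) (H : ℤ) : ℕ :=
  ((Finset.Icc 2 j).powerset.filter (fun T => (∑ i ∈ T, (Nat.fib i : ℤ)) ≤ H)).card

lemma sum_fib_nonneg (T : Finset ℕ) : (0:ℤ) ≤ ∑ i ∈ T, (Nat.fib i : ℤ) :=
  Finset.sum_nonneg (fun i _ => Int.ofNat_nonneg _)

lemma D_neg {j : ℕ} {H : ℤ} (h : H < 0) : D j H = 0 := by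
  unfold D
  rw [Finset.card_eq_zero, Finset.filter_eq_empty_iff]
  intro T _
  push_neg
  exact lt_of_lt_of_le h (sum_fib_nonneg T)

lemma sigma_eq (j : ℕ) (hj : 1 ≤ j) :
    (∑ i ∈ Finset.Icc 2 j, Nat.fib i) = Nat.fib (j+2) - 2 := by
  induction j with
  | zero => omega
  | succ n ih =>
    rcases Nat.lt_or_ge n 1 with h | h
    · interval_cases n <;> decide
    · rw [Finset.sum_Icc_succ_top (by omega), ih h]
      have hrec : Nat.fib (n+1+2) = Nat.fib (n+1) + Nat.fib (n+2) := Nat.fib_add_two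
      have h2 : 2 ≤ Nat.fib (n+2) := by
        calc 2 = Nat.fib 3 := rfl
        _ ≤ Nat.fib (n+2) := Nat.fib_mono (by omega)
      omega

lemma card_Icc2 (j : ℕ) : (Finset.Icc 2 j).card = j - 1 := by
  rw [Nat.card_Icc]; omega

lemma D_full {j : ℕ} {H : ℤ} (hj : 1 ≤ j) (h : (Nat.fib (j+2) : ℤ) - 2 ≤ H) :
    D j H = 2 ^ (j - 1) := by
  unfold D
  rw [Finset.filter_true_of_mem, Finset.card_powerset, card_Icc2]
  intro T hT
  rw [Finset.mem_powerset] at hT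
  calc (∑ i ∈ T, (Nat.fib i : ℤ)) ≤ ∑ i ∈ Finset.Icc 2 j, (Nat.fib i : ℤ) :=
        Finset.sum_le_sum_of_subset_of_nonneg hT (fun i _ _ => Int.ofNat_nonneg _)
  _ = ((∑ i ∈ Finset.Icc 2 j, Nat.fib i : ℕ) : ℤ) := by push_cast; ring
  _ ≤ H := by
      rw [sigma_eq j hj]
      have h2 : 2 ≤ Nat.fib (j+2) := by
        calc 2 = Nat.fib 3 := rfl
        _ ≤ Nat.fib (j+2) := Nat.fib_mono (by omega)
      push_cast [Nat.cast_sub h2] at h ⊢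
      omega

lemma D_split {j : ℕ} (H : ℤ) (hj : 2 ≤ j) :
    D j H = D (j-1) H + D (j-1) (H - Nat.fib j) := by
  obtain ⟨j', rfl⟩ : ∃ j', j = j' + 1 := ⟨j - 1, by omega⟩
  have hIcc : Finset.Icc 2 (j'+1) = insert (j'+1) (Finset.Icc 2 j') := by
    rw [← Finset.Ico_insert_right (by omega : 2 ≤ j'+1), Finset.Ico_add_one_right_eq_Icc]
  have hnot : (j'+1) ∉ Finset.Icc 2 j' := by simp
  unfold D
  simp only [Nat.add_sub_cancel]
  rw [hIcc, Finset.powerset_insert, Finset.filter_union]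
  have hinj : Set.InjOn (insert (j'+1)) (((Finset.Icc 2 j').powerset : Finset (Finset ℕ)) : Set (Finset ℕ)) := by
    intro T hT T' hT' hins
    rw [Finset.mem_coe, Finset.mem_powerset] at hT hT'
    have h1 : (j'+1) ∉ T := fun h => hnot (hT h)
    have h2 : (j'+1) ∉ T' := fun h => hnot (hT' h)
    have := congrArg (Finset.erase · (j'+1)) hins
    simpa [Finset.erase_insert h1, Finset.erase_insert h2] using this
  rw [Finset.card_union_of_disjoint]
  · congr 1
    rw [Finset.filter_image]
    rw [Finset.card_image_of_injOn (hinj.mono (by intro x hx; exact Finset.mem_coe.mpr (Finset.mem_filter.mp (Finset.mem_coe.mp hx)).1))]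
    congr 1
    apply Finset.filter_congr
    intro T hT
    rw [Finset.mem_powerset] at hT
    have h1 : (j'+1) ∉ T := fun h => hnot (hT h)
    rw [Finset.sum_insert h1]
    constructor <;> intro h <;> omega
  · rw [Finset.disjoint_left]
    intro T hT hT'
    rw [Finset.mem_filter, Finset.mem_powerset] at hT
    rw [Finset.mem_filter, Finset.mem_image] at hT'
    obtain ⟨⟨T', _, rfl⟩, -⟩ := hT'
    exact hnot (hT.1 (Finset.mem_insert_self _ _))

lemma fib2le {j : ℕ} (hj : 1 ≤ j) : 2 ≤ Nat.fib (j+2) := by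
  calc 2 = Nat.fib 3 := rfl
  _ ≤ Nat.fib (j+2) := Nat.fib_mono (by omega)

lemma D_compl {j : ℕ} (H : ℤ) (hj : 1 ≤ j) :
    D j H + D j ((Nat.fib (j+2) : ℤ) - 3 - H) = 2 ^ (j - 1) := by
  classical
  set I := Finset.Icc 2 j with hI
  have hσ : (∑ i ∈ I, (Nat.fib i : ℤ)) = (Nat.fib (j+2) : ℤ) - 2 := by
    have h1 := sigma_eq j hj
    have h2 := fib2le hj
    have h3 : (∑ i ∈ I, (Nat.fib i : ℤ)) = ((∑ i ∈ I, Nat.fib i : ℕ) : ℤ) := by push_cast; rfl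
    rw [h3, h1, Nat.cast_sub h2]
    norm_num
  have key : D j ((Nat.fib (j+2):ℤ) - 3 - H)
      = (I.powerset.filter (fun T => ¬ (∑ i ∈ T, (Nat.fib i:ℤ)) ≤ H)).card := by
    unfold D
    apply Finset.card_bij' (fun T _ => I \ T) (fun T _ => I \ T)
    · intro T hT
      simp only [Finset.mem_filter, Finset.mem_powerset] at hT ⊢
      obtain ⟨hsub, hsum⟩ := hT
      refine ⟨Finset.sdiff_subset, ?_⟩
      have hs : (∑ i ∈ I \ T, (Nat.fib i : ℤ)) = (∑ i ∈ I, (Nat.fib i:ℤ)) - ∑ i ∈ T, (Nat.fib i:ℤ) := by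
        rw [eq_sub_iff_add_eq, Finset.sum_sdiff hsub]
      rw [hs, hσ]
      omega
    · intro T hT
      simp only [Finset.mem_filter, Finset.mem_powerset] at hT ⊢
      obtain ⟨hsub, hsum⟩ := hT
      refine ⟨Finset.sdiff_subset, ?_⟩
      have hs : (∑ i ∈ I \ T, (Nat.fib i : ℤ)) = (∑ i ∈ I, (Nat.fib i:ℤ)) - ∑ i ∈ T, (Nat.fib i:ℤ) := by
        rw [eq_sub_iff_add_eq, Finset.sum_sdiff hsub]
      rw [hs, hσ]
      omega
    · intro T hT
      rw [Finset.mem_filter, Finset.mem_powerset] at hT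
      exact Finset.sdiff_sdiff_eq_self hT.1
    · intro T hT
      rw [Finset.mem_filter, Finset.mem_powerset] at hT
      exact Finset.sdiff_sdiff_eq_self hT.1
  rw [key]
  unfold D
  rw [Finset.card_filter_add_card_filter_not]
  rw [Finset.card_powerset, card_Icc2]

lemma D_drop {j j' : ℕ} (H : ℤ) (hle : j' ≤ j) (h : H < (Nat.fib (j'+1) : ℤ)) :
    D j H = D j' H := by
  unfold D
  congr 1
  apply Finset.ext
  intro T
  simp only [Finset.mem_filter, Finset.mem_powerset]
  constructor
  · rintro ⟨hsub, hsum⟩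
    refine ⟨?_, hsum⟩
    intro i hi
    have hmem := hsub hi
    rw [Finset.mem_Icc] at hmem ⊢
    refine ⟨hmem.1, ?_⟩
    by_contra hcon
    push_neg at hcon
    have h1 : (Nat.fib (j'+1) : ℤ) ≤ (Nat.fib i : ℤ) := by
      exact_mod_cast Nat.fib_mono (by omega)
    have h2 : (Nat.fib i : ℤ) ≤ ∑ i ∈ T, (Nat.fib i : ℤ) :=
      Finset.single_le_sum (fun i _ => Int.ofNat_nonneg _) hi
    omega
  · rintro ⟨hsub, hsum⟩
    exact ⟨hsub.trans (Finset.Icc_subset_Icc_right hle), hsum⟩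

lemma fib_injOn : Set.InjOn Nat.fib (Set.Ici 2) := Nat.fib_strictMonoOn.injOn

lemma R_eq (n j : ℕ) (hn : n < Nat.fib (j+1)) :
    R n = ((Finset.Icc 2 j).powerset.filter (fun T => (∑ i ∈ T, Nat.fib i) = n)).card := by
  classical
  rw [← Nat.card_eq_finsetCard]
  unfold R
  have himg : ∀ T : Finset ℕ, T ∈ (Finset.Icc 2 j).powerset.filter
      (fun T => (∑ i ∈ T, Nat.fib i) = n) →
      (∀ x ∈ T.image Nat.fib, IsFibNum x) ∧ (∑ x ∈ T.image Nat.fib, x) = n := by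
    intro T hT
    rw [Finset.mem_filter, Finset.mem_powerset] at hT
    obtain ⟨hsub, hsum⟩ := hT
    have hinj : ∀ i ∈ T, ∀ i' ∈ T, Nat.fib i = Nat.fib i' → i = i' := by
      intro i hi i' hi' h
      exact fib_injOn (Finset.mem_Icc.mp (hsub hi)).1 (Finset.mem_Icc.mp (hsub hi')).1 h
    constructor
    · intro x hx
      rw [Finset.mem_image] at hx
      obtain ⟨i, hi, rfl⟩ := hx
      exact ⟨i, by have := (Finset.mem_Icc.mp (hsub hi)).1; omega, rfl⟩
    · rw [Finset.sum_image hinj]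
      exact hsum
  symm
  apply Nat.card_eq_of_bijective
    (fun T => (⟨T.1.image Nat.fib, himg T.1 T.2⟩ :
      {S : Finset ℕ // (∀ x ∈ S, IsFibNum x) ∧ (∑ x ∈ S, x) = n}))
  constructor
  · rintro ⟨T, hT⟩ ⟨T', hT'⟩ h
    simp only [Subtype.mk.injEq] at h ⊢
    rw [Finset.mem_filter, Finset.mem_powerset] at hT hT'
    ext i
    constructor
    · intro hi
      have hmem : Nat.fib i ∈ T'.image Nat.fib := h ▸ Finset.mem_image_of_mem _ hi
      rw [Finset.mem_image] at hmem
      obtain ⟨i', hi', he⟩ := hmem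
      have heq := fib_injOn (Finset.mem_Icc.mp (hT'.1 hi')).1
        (Finset.mem_Icc.mp (hT.1 hi)).1 he
      rwa [← heq]
    · intro hi
      have hmem : Nat.fib i ∈ T.image Nat.fib := h ▸ Finset.mem_image_of_mem _ hi
      rw [Finset.mem_image] at hmem
      obtain ⟨i', hi', he⟩ := hmem
      have heq := fib_injOn (Finset.mem_Icc.mp (hT.1 hi')).1
        (Finset.mem_Icc.mp (hT'.1 hi)).1 he
      rwa [← heq]
  · rintro ⟨S, hfib, hsum⟩
    have hex : ∀ x ∈ S, ∃ i, 2 ≤ i ∧ i ≤ j ∧ Nat.fib i = x := by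
      intro x hx
      obtain ⟨mm, hm0, hmx⟩ := hfib x hx
      have hxn : x ≤ n := hsum ▸ Finset.single_le_sum (f := fun x => x) (fun _ _ => Nat.zero_le _) hx
      have hxlt : x < Nat.fib (j+1) := lt_of_le_of_lt hxn hn
      refine ⟨if mm = 1 then 2 else mm, by split <;> omega, ?_, ?_⟩
      · by_contra hcon
        push_neg at hcon
        have : Nat.fib (j+1) ≤ Nat.fib (if mm = 1 then 2 else mm) := Nat.fib_mono (by omega)
        have hfeq : Nat.fib (if mm = 1 then 2 else mm) = x := by
          split
          · next h1 => rw [← hmx, h1]; decide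
          · exact hmx
        omega
      · split
        · next h1 => rw [← hmx, h1]; decide
        · exact hmx
    set T : Finset ℕ := S.attach.image (fun p => (hex p.1 p.2).choose) with hTdef
    have hTsub : T ⊆ Finset.Icc 2 j := by
      intro i hi
      rw [hTdef, Finset.mem_image] at hi
      obtain ⟨p, _, rfl⟩ := hi
      obtain ⟨h1, h2, h3⟩ := (hex p.1 p.2).choose_spec
      exact Finset.mem_Icc.mpr ⟨h1, h2⟩
    have himgS : T.image Nat.fib = S := by
      ext y
      constructor
      · intro hy
        rw [Finset.mem_image] at hy
        obtain ⟨i, hi, rfl⟩ := hy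
        rw [hTdef, Finset.mem_image] at hi
        obtain ⟨p, _, rfl⟩ := hi
        obtain ⟨h1, h2, h3⟩ := (hex p.1 p.2).choose_spec
        rw [h3]; exact p.2
      · intro hy
        rw [Finset.mem_image]
        refine ⟨(hex y hy).choose, ?_, (hex y hy).choose_spec.2.2⟩
        rw [hTdef, Finset.mem_image]
        exact ⟨⟨y, hy⟩, Finset.mem_attach _ _, rfl⟩
    have hTsum : (∑ i ∈ T, Nat.fib i) = n := by
      have hinj : ∀ i ∈ T, ∀ i' ∈ T, Nat.fib i = Nat.fib i' → i = i' := by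
        intro i hi i' hi' h
        exact fib_injOn (Finset.mem_Icc.mp (hTsub hi)).1 (Finset.mem_Icc.mp (hTsub hi')).1 h
      calc (∑ i ∈ T, Nat.fib i) = ∑ x ∈ T.image Nat.fib, x := (Finset.sum_image (f := fun x => x) hinj).symm
      _ = n := by rw [himgS]; exact hsum
    refine ⟨⟨T, ?_⟩, ?_⟩
    · rw [Finset.mem_filter, Finset.mem_powerset]
      exact ⟨hTsub, hTsum⟩
    · exact Subtype.ext himgS

lemma D_natcast (j H : ℕ) : D j (H : ℤ) =
    ((Finset.Icc 2 j).powerset.filter (fun T => (∑ i ∈ T, Nat.fib i) ≤ H)).card := by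
  unfold D
  congr 1
  apply Finset.filter_congr
  intro T _
  constructor
  · intro h; exact_mod_cast (by push_cast at h; exact_mod_cast h : ((∑ i ∈ T, Nat.fib i : ℕ) : ℤ) ≤ (H:ℤ))
  · intro h; push_cast; exact_mod_cast h

lemma A_eq_D {H j : ℕ} (h : H < Nat.fib (j+1)) : (A H) = D j (H : ℤ) := by
  classical
  rw [D_natcast]
  unfold A
  rw [Finset.sum_congr rfl (fun n hn => R_eq n j
    (lt_of_le_of_lt (by rw [Finset.mem_range] at hn; omega) h))]
  symm
  rw [Finset.card_eq_sum_card_fiberwise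
    (f := fun T => ∑ i ∈ T, Nat.fib i) (t := Finset.range (H+1))
    (by intro T hT
        simp only [Finset.mem_coe, Finset.mem_filter] at hT
        simp only [Finset.mem_coe, Finset.mem_range]
        omega)]
  apply Finset.sum_congr rfl
  intro n hn
  rw [Finset.mem_range] at hn
  congr 1
  rw [Finset.filter_filter]
  apply Finset.filter_congr
  intro T _
  constructor
  · intro hh; exact hh.2
  · intro hh; exact ⟨by omega, hh⟩

lemma A_zero : A 0 = 1 := by
  have h := A_eq_D (H := 0) (j := 1) (by decide)
  rw [h]
  decide

lemma fibZ (i : ℕ) : (Nat.fib (i+2) : ℤ) = Nat.fib i + Nat.fib (i+1) := by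
  exact_mod_cast congrArg (Nat.cast : ℕ → ℤ) (Nat.fib_add_two (n := i))

lemma Pstep (i : ℕ) (y : ℤ) (hy : 0 ≤ y) :
    D (i+2) ((Nat.fib (i+3) : ℤ) + y) = 2^i + D (i+1) ((Nat.fib (i+1) : ℤ) + y) := by
  have f4 : Nat.fib (i+4) = Nat.fib (i+2) + Nat.fib (i+3) := by
    rw [show i+4 = (i+2)+2 by omega, show i+3 = (i+2)+1 by omega]; exact Nat.fib_add_two
  have f3 : Nat.fib (i+3) = Nat.fib (i+1) + Nat.fib (i+2) := by
    rw [show i+3 = (i+1)+2 by omega, show i+2 = (i+1)+1 by omega]; exact Nat.fib_add_two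
  have c1 := D_compl (j := i+2) ((Nat.fib (i+3) : ℤ) + y) (by omega)
  rw [show i+2+2 = i+4 by omega, show i+2-1 = i+1 by omega] at c1
  have e1 : (Nat.fib (i+4) : ℤ) - 3 - ((Nat.fib (i+3) : ℤ) + y)
      = (Nat.fib (i+2) : ℤ) - 3 - y := by omega
  rw [e1] at c1
  have c2 : D (i+2) ((Nat.fib (i+2) : ℤ) - 3 - y) = D (i+1) ((Nat.fib (i+2) : ℤ) - 3 - y) :=
    D_drop _ (by omega) (by rw [show i+1+1 = i+2 by omega]; omega)
  have c3 := D_compl (j := i+1) ((Nat.fib (i+2) : ℤ) - 3 - y) (by omega)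
  rw [show i+1+2 = i+3 by omega, show i+1-1 = i by omega] at c3
  have e2 : (Nat.fib (i+3) : ℤ) - 3 - ((Nat.fib (i+2) : ℤ) - 3 - y)
      = (Nat.fib (i+1) : ℤ) + y := by omega
  rw [e2] at c3
  have hp : (2:ℕ)^(i+1) = 2 * 2^i := by ring
  omega
lemma A_rec (i z : ℕ) (hz : z < Nat.fib (i+1)) :
    A (Nat.fib (i+4) + z) = 2^(i+1) + A (Nat.fib (i+2) + z) + A z := by
  have hz3 : z < Nat.fib (i+3) := lt_of_lt_of_le hz (Nat.fib_mono (by omega))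
  have hz4 : z < Nat.fib (i+4) := lt_of_lt_of_le hz (Nat.fib_mono (by omega))
  have h1 : Nat.fib (i+4) + z < Nat.fib (i+4+1) := by
    have f5 : Nat.fib (i+4+1) = Nat.fib (i+3) + Nat.fib (i+4) := by
      rw [show i+4+1 = (i+3)+2 by omega, show i+4 = (i+3)+1 by omega]; exact Nat.fib_add_two
    omega
  have a1 := A_eq_D (H := Nat.fib (i+4) + z) (j := i+4) h1
  have a2 := A_eq_D (H := z) (j := i+3) hz4
  have h2 : Nat.fib (i+2) + z < Nat.fib (i+2+1) := by
    have f3 : Nat.fib (i+2+1) = Nat.fib (i+1) + Nat.fib (i+2) := by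
      rw [show i+2+1 = (i+1)+2 by omega, show i+2 = (i+1)+1 by omega]; exact Nat.fib_add_two
    omega
  have a3 := A_eq_D (H := Nat.fib (i+2) + z) (j := i+2) h2
  have s1 : D (i+4) ((Nat.fib (i+4) + z : ℕ) : ℤ) = D (i+3) ((Nat.fib (i+4) + z : ℕ) : ℤ)
      + D (i+3) (((Nat.fib (i+4) + z : ℕ) : ℤ) - Nat.fib (i+4)) := by
    have := D_split (j := i+4) ((Nat.fib (i+4) + z : ℕ) : ℤ) (by omega)
    simpa using this
  have e1 : ((Nat.fib (i+4) + z : ℕ) : ℤ) - Nat.fib (i+4) = (z : ℤ) := by push_cast; ring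
  have e2 : ((Nat.fib (i+4) + z : ℕ) : ℤ) = (Nat.fib (i+4) : ℤ) + (z:ℤ) := by push_cast; ring
  have p1 : D (i+3) ((Nat.fib (i+4) + z : ℕ) : ℤ) = 2^(i+1) + D (i+2) ((Nat.fib (i+2) : ℤ) + z) := by
    rw [e2]
    have hps := Pstep (i+1) (z : ℤ) (by positivity)
    rw [show i+1+2 = i+3 by omega, show i+1+3 = i+4 by omega, show i+1+1 = i+2 by omega] at hps
    exact hps
  have e3 : ((Nat.fib (i+2) + z : ℕ) : ℤ) = (Nat.fib (i+2) : ℤ) + (z:ℤ) := by push_cast; ring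
  rw [a1, a2, a3, s1, e1, p1, e3]

def gN (m : ℕ) : ℕ := (2^m + 3*m + 3)/6

lemma gN_rec (i : ℕ) : gN (i+4) = 2^(i+1) + gN (i+2) + 1 := by
  show (2^(i+4) + 3*(i+4) + 3)/6 = 2^(i+1) + (2^(i+2) + 3*(i+2)+3)/6 + 1
  have h : 2^(i+4) + 3*(i+4) + 3 = (2^(i+2) + 3*(i+2) + 3) + (2^(i+1)+1)*6 := by ring
  rw [h, Nat.add_mul_div_right _ _ (by norm_num : (0:ℕ) < 6)]
  omega

lemma floor_eq_gN (m : ℕ) : ⌊(2^m : ℚ)/6 + ((m:ℚ)+1)/2⌋ = (gN m : ℤ) := by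
  have h1 : (2^m : ℚ)/6 + ((m:ℚ)+1)/2 = ((2^m + 3*m + 3 : ℕ) : ℚ)/((6:ℕ):ℚ) := by
    push_cast; ring
  rw [h1, Rat.floor_natCast_div_natCast]
  unfold gN
  norm_cast

lemma A_fib (i : ℕ) : A (Nat.fib (i+2)) = gN (i+2) := by
  induction i using Nat.strong_induction_on with
  | _ i ih =>
    match i with
    | 0 =>
      have h := A_eq_D (H := 1) (j := 2) (by decide)
      have : A (Nat.fib 2) = A 1 := by norm_num
      rw [this, h]
      decide
    | 1 =>
      have h := A_eq_D (H := 2) (j := 3) (by decide)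
      have : A (Nat.fib 3) = A 2 := by norm_num
      rw [this, h]
      decide
    | (i+2) =>
      have hrec := A_rec i 0 (by have := Nat.fib_pos.mpr (show 0 < i+1 by omega); omega)
      rw [show i+2+2 = i+4 by omega]
      simp only [Nat.add_zero] at hrec
      rw [hrec, A_zero, ih i (by omega), gN_rec]

lemma fInt_succ (t : ℕ) (ht : 1 ≤ t) : fInt (t+1) = fInt t + 2^(2*t-1) := by
  obtain ⟨s, rfl⟩ : ∃ s, t = s+1 := ⟨t-1, by omega⟩
  show (1 + 2*(4^(s+1) - 1)/3 : ℤ) = (1 + 2*(4^s - 1)/3) + 2^(2*(s+1)-1)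
  have h : (2:ℤ)*(4^(s+1) - 1) = 2*(4^s - 1) + (2*4^s)*3 := by ring
  rw [h, Int.add_mul_ediv_right _ _ (by norm_num : (3:ℤ) ≠ 0)]
  have h2 : (2:ℤ)*4^s = 2^(2*(s+1)-1) := by
    rw [show 2*(s+1)-1 = 2*s+1 by omega, pow_succ, pow_mul]
    ring
  omega

lemma Dn_split {j : ℕ} (n : ℕ) (hj : 2 ≤ j) (h : Nat.fib j ≤ n) :
    D j (n:ℤ) = D (j-1) (n:ℤ) + D (j-1) ((n - Nat.fib j : ℕ) : ℤ) := by
  have := D_split (j := j) (n : ℤ) hj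
  rw [show ((n:ℤ) - Nat.fib j) = ((n - Nat.fib j : ℕ) : ℤ) by push_cast [Nat.cast_sub h]; ring] at this
  exact this

lemma Dn_drop {j j' : ℕ} (n : ℕ) (hle : j' ≤ j) (h : n < Nat.fib (j'+1)) :
    D j (n:ℤ) = D j' (n:ℤ) := D_drop _ hle (by exact_mod_cast h)

lemma Dn_full {j : ℕ} (n : ℕ) (hj : 1 ≤ j) (h : Nat.fib (j+2) ≤ n + 2) :
    D j (n:ℤ) = 2^(j-1) := D_full hj (by push_cast; omega)

lemma Pstep_n (i : ℕ) (y : ℕ) :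
    D (i+2) ((Nat.fib (i+3) + y : ℕ) : ℤ) = 2^i + D (i+1) ((Nat.fib (i+1) + y : ℕ) : ℤ) := by
  have := Pstep i (y : ℤ) (by positivity)
  rw [show ((Nat.fib (i+3) : ℤ) + y) = ((Nat.fib (i+3) + y : ℕ) : ℤ) by push_cast; ring,
      show ((Nat.fib (i+1) : ℤ) + y) = ((Nat.fib (i+1) + y : ℕ) : ℤ) by push_cast; ring] at this
  exact this

lemma fib_eq (a b c : ℕ) (h1 : a = c + 2) (h2 : b = c + 1) :
    Nat.fib a = Nat.fib c + Nat.fib b := by subst h1 h2; exact Nat.fib_add_two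

lemma key_base2 (mu y' : ℕ) (hy' : y' < Nat.fib (mu+1)) :
    (A (Nat.fib (mu+4) + (Nat.fib (mu+2) + y')) : ℤ)
      = 3 * 2^mu + 2 * A (Nat.fib (mu+2) + y') - A y' := by
  have f3 := fib_eq (mu+3) (mu+2) (mu+1) (by omega) (by omega)
  have f4 := fib_eq (mu+4) (mu+3) (mu+2) (by omega) (by omega)
  have f5 := fib_eq (mu+5) (mu+4) (mu+3) (by omega) (by omega)
  have fmono : Nat.fib (mu+1) ≤ Nat.fib (mu+2) := Nat.fib_mono (by omega)
  have aX : A (Nat.fib (mu+4) + (Nat.fib (mu+2) + y'))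
      = D (mu+4) ((Nat.fib (mu+4) + (Nat.fib (mu+2) + y') : ℕ) : ℤ) :=
    A_eq_D (by rw [show mu+4+1 = mu+5 by omega]; omega)
  have s1 := Dn_split (j := mu+4) (Nat.fib (mu+4) + (Nat.fib (mu+2) + y')) (by omega)
    (by omega)
  rw [show mu+4-1 = mu+3 by omega,
      show Nat.fib (mu+4) + (Nat.fib (mu+2) + y') - Nat.fib (mu+4) = Nat.fib (mu+2) + y' by omega] at s1
  have az3 : A (Nat.fib (mu+2) + y') = D (mu+3) ((Nat.fib (mu+2) + y' : ℕ) : ℤ) :=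
    A_eq_D (by rw [show mu+3+1 = mu+4 by omega]; omega)
  have az2 : A (Nat.fib (mu+2) + y') = D (mu+2) ((Nat.fib (mu+2) + y' : ℕ) : ℤ) :=
    A_eq_D (by rw [show mu+2+1 = mu+3 by omega]; omega)
  have p1 := Pstep_n (mu+1) (Nat.fib (mu+2) + y')
  rw [show mu+1+2 = mu+3 by omega, show mu+1+3 = mu+4 by omega,
      show mu+1+1 = mu+2 by omega] at p1
  have s2 := Dn_split (j := mu+2) (Nat.fib (mu+2) + (Nat.fib (mu+2) + y')) (by omega)
    (by omega)
  rw [show mu+2-1 = mu+1 by omega,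
      show Nat.fib (mu+2) + (Nat.fib (mu+2) + y') - Nat.fib (mu+2) = Nat.fib (mu+2) + y' by omega] at s2
  have full := Dn_full (j := mu+1) (Nat.fib (mu+2) + (Nat.fib (mu+2) + y')) (by omega)
    (by rw [show mu+1+2 = mu+3 by omega]; omega)
  rw [show mu+1-1 = mu by omega] at full
  have s3 := Dn_split (j := mu+2) (Nat.fib (mu+2) + y') (by omega) (by omega)
  rw [show mu+2-1 = mu+1 by omega,
      show Nat.fib (mu+2) + y' - Nat.fib (mu+2) = y' by omega] at s3
  have ay : A y' = D (mu+1) ((y' : ℕ) : ℤ) :=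
    A_eq_D (by rw [show mu+1+1 = mu+2 by omega]; omega)
  have hp : (2:ℕ)^(mu+1) = 2*2^mu := by ring
  have hcast : ((2^mu : ℕ) : ℤ) = (2:ℤ)^mu := by push_cast; rfl
  omega

lemma key_base3 (mu y' : ℕ) (hy' : y' < Nat.fib (mu+1)) :
    (A (Nat.fib (mu+5) + (Nat.fib (mu+2) + y')) : ℤ)
      = 3 * 2^(mu+1) + 2 * A (Nat.fib (mu+2) + y') := by
  have f3 := fib_eq (mu+3) (mu+2) (mu+1) (by omega) (by omega)
  have f4 := fib_eq (mu+4) (mu+3) (mu+2) (by omega) (by omega)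
  have f5 := fib_eq (mu+5) (mu+4) (mu+3) (by omega) (by omega)
  have f6 := fib_eq (mu+6) (mu+5) (mu+4) (by omega) (by omega)
  have fmono : Nat.fib (mu+1) ≤ Nat.fib (mu+2) := Nat.fib_mono (by omega)
  have aX : A (Nat.fib (mu+5) + (Nat.fib (mu+2) + y'))
      = D (mu+5) ((Nat.fib (mu+5) + (Nat.fib (mu+2) + y') : ℕ) : ℤ) :=
    A_eq_D (by rw [show mu+5+1 = mu+6 by omega]; omega)
  have s1 := Dn_split (j := mu+5) (Nat.fib (mu+5) + (Nat.fib (mu+2) + y')) (by omega)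
    (by omega)
  rw [show mu+5-1 = mu+4 by omega,
      show Nat.fib (mu+5) + (Nat.fib (mu+2) + y') - Nat.fib (mu+5) = Nat.fib (mu+2) + y' by omega] at s1
  have az4 : A (Nat.fib (mu+2) + y') = D (mu+4) ((Nat.fib (mu+2) + y' : ℕ) : ℤ) :=
    A_eq_D (by rw [show mu+4+1 = mu+5 by omega]; omega)
  have az2 : A (Nat.fib (mu+2) + y') = D (mu+2) ((Nat.fib (mu+2) + y' : ℕ) : ℤ) :=
    A_eq_D (by rw [show mu+2+1 = mu+3 by omega]; omega)
  have p1 := Pstep_n (mu+2) (Nat.fib (mu+2) + y')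
  rw [show mu+2+2 = mu+4 by omega, show mu+2+3 = mu+5 by omega,
      show mu+2+1 = mu+3 by omega] at p1
  have s2 := Dn_split (j := mu+3) (Nat.fib (mu+3) + (Nat.fib (mu+2) + y')) (by omega)
    (by omega)
  rw [show mu+3-1 = mu+2 by omega,
      show Nat.fib (mu+3) + (Nat.fib (mu+2) + y') - Nat.fib (mu+3) = Nat.fib (mu+2) + y' by omega] at s2
  have full := Dn_full (j := mu+2) (Nat.fib (mu+3) + (Nat.fib (mu+2) + y')) (by omega)
    (by rw [show mu+2+2 = mu+4 by omega]; omega)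
  rw [show mu+2-1 = mu+1 by omega] at full
  have hp : (2:ℕ)^(mu+2) = 2*2^(mu+1) := by ring
  have hcast : ((2^(mu+1) : ℕ) : ℤ) = (2:ℤ)^(mu+1) := by push_cast; rfl
  omega

lemma key (mu gg y' : ℕ) (hg : 2 ≤ gg) (hy' : y' < Nat.fib (mu+1)) :
    (A (Nat.fib (mu+2+gg) + (Nat.fib (mu+2) + y')) : ℤ)
      = fInt ((gg+2)/2) * 2^(mu+2+gg-2*((gg+2)/2))
        + (((gg+2)/2 : ℕ) : ℤ) * A (Nat.fib (mu+2) + y')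
        - (2*(((gg+2)/2 : ℕ):ℤ) - 1 - (gg:ℤ)) * A y' := by
  induction gg using Nat.strong_induction_on with
  | _ gg ih =>
    match gg, hg with
    | 2, _ =>
      rw [show mu+2+2 = mu+4 by omega, show (2+2)/2 = 2 by omega,
          show mu+4-2*2 = mu by omega, key_base2 mu y' hy']
      have : fInt 2 = 3 := by decide
      rw [this]
      push_cast
      ring
    | 3, _ =>
      rw [show mu+2+3 = mu+5 by omega, show (3+2)/2 = 2 by omega,
          show mu+2+3-2*2 = mu+1 by omega, key_base3 mu y' hy']
      have : fInt 2 = 3 := by decide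
      rw [this]
      push_cast
      ring
    | (g'+4), _ =>
      set T := (g'+4)/2 with hT
      have hT1 : 2*T ≤ g'+4 := by omega
      have hT2 : g'+3 ≤ 2*T := by omega
      have hTge : 2 ≤ T := by omega
      have ihg := ih (g'+2) (by omega) (by omega)
      have hz : Nat.fib (mu+2) + y' < Nat.fib (mu+g'+3) := by
        have f3 := fib_eq (mu+3) (mu+2) (mu+1) (by omega) (by omega)
        have : Nat.fib (mu+3) ≤ Nat.fib (mu+g'+3) := Nat.fib_mono (by omega)
        omega
      have hrec := A_rec (mu+g'+2) (Nat.fib (mu+2) + y') (by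
        rw [show mu+g'+2+1 = mu+g'+3 by omega]; exact hz)
      rw [show mu+g'+2+4 = mu+2+(g'+4) by omega, show mu+g'+2+2 = mu+2+(g'+2) by omega] at hrec
      have hcast : (A (Nat.fib (mu+2+(g'+4)) + (Nat.fib (mu+2) + y')) : ℤ)
          = 2^(mu+g'+3) + (A (Nat.fib (mu+2+(g'+2)) + (Nat.fib (mu+2) + y')) : ℤ)
            + (A (Nat.fib (mu+2) + y') : ℤ) := by
        rw [hrec, show mu+g'+2+1 = mu+g'+3 by omega]
        push_cast
        try ring
      rw [hcast, ihg]
      rw [show (g'+2+2)/2 = T by omega, show (g'+4+2)/2 = T+1 by omega]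
      rw [show mu+2+(g'+4)-2*(T+1) = mu+2+(g'+2)-2*T by omega]
      rw [fInt_succ T (by omega)]
      have h2 : (2:ℤ)^(mu+g'+3) = 2^(2*T-1) * 2^(mu+2+(g'+2)-2*T) := by
        rw [← pow_add]
        congr 1
        omega
      rw [h2]
      push_cast
      ring

lemma Icc_bot_insert (l kk : ℕ) (h : l ≤ kk) :
    Finset.Icc l kk = insert l (Finset.Icc (l+1) kk) := by
  ext i
  simp only [Finset.mem_Icc, Finset.mem_insert]
  omega


/-- Theorem 1.2: exact formula for the summatory function `A(H)`. -/
theorem summatory_exact_formula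
    (H k : ℕ) (m x t : ℕ → ℕ) (ε a : ℕ → ℤ)
    (hH : 0 < H)
    (hexp : H = ∑ i ∈ Finset.range (k + 1), Nat.fib (m i))
    (hgap : ∀ i : ℕ, 1 ≤ i → i ≤ k → m i + 2 ≤ m (i - 1))
    (hmk : 2 ≤ m k)
    (hx : ∀ l : ℕ, l ≤ k + 1 → x l = ∑ i ∈ Finset.Icc l k, Nat.fib (m i))
    (ht : ∀ i : ℕ, 1 ≤ i → i ≤ k → t i = (m (i - 1) - m i + 2) / 2)
    (hε : ∀ i : ℕ, 1 ≤ i → i ≤ k →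
      ε i = 2 * (t i : ℤ) - 1 - (m (i - 1) : ℤ) + (m i : ℤ))
    (ha0 : a 0 = 1)
    (ha1 : 1 ≤ k → a 1 = (t 1 : ℤ))
    (ha : ∀ l : ℕ, 1 ≤ l → l ≤ k - 1 →
      a (l + 1) = (t (l + 1) : ℤ) * a l - ε l * a (l - 1)) :
    (1 ≤ k →
      (A H : ℤ) = a k * ⌊(2 ^ m k : ℚ) / 6 + ((m k : ℚ) + 1) / 2⌋ - ε k * a (k - 1)
        + ∑ i ∈ Finset.Icc 1 k, a (i - 1) * fInt (t i) * 2 ^ (m (i - 1) - 2 * t i)) ∧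
    (k = 0 → (A H : ℤ) = ⌊(2 ^ m 0 : ℚ) / 6 + ((m 0 : ℚ) + 1) / 2⌋) := by
  -- basic structural facts
  have hmono : ∀ l, l < k → m (l+1) + 2 ≤ m l := by
    intro l hl
    have := hgap (l+1) (by omega) (by omega)
    simpa using this
  have hm2aux : ∀ dl l, l + dl = k → 2 ≤ m l := by
    intro dl
    induction dl with
    | zero => intro l h; have : l = k := by omega
              rw [this]; exact hmk
    | succ d ihd =>
      intro l h
      have h1 := ihd (l+1) (by omega)
      have h2 := hmono l (by omega)
      omega
  have hm2 : ∀ l, l ≤ k → 2 ≤ m l := fun l hl => hm2aux (k-l) l (by omega)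
  have hxk1 : x (k+1) = 0 := by
    rw [hx (k+1) le_rfl, Finset.Icc_eq_empty (by omega)]
    simp
  have hxsucc : ∀ l, l ≤ k → x l = Nat.fib (m l) + x (l+1) := by
    intro l hl
    rw [hx l (by omega), hx (l+1) (by omega), Icc_bot_insert l k hl,
        Finset.sum_insert (by simp)]
  have hxk : x k = Nat.fib (m k) := by
    rw [hxsucc k le_rfl, hxk1]
    omega
  have hx0 : H = x 0 := by
    rw [hx 0 (by omega), hexp]
    congr 1
    rw [Finset.range_eq_Ico, Finset.Ico_add_one_right_eq_Icc]
  have hxltaux : ∀ dl l, l + dl = k → x l < Nat.fib (m l + 1) := by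
    intro dl
    induction dl with
    | zero =>
      intro l h
      have : l = k := by omega
      subst this
      rw [hxk]
      exact Nat.fib_lt_fib_succ hmk
    | succ d ihd =>
      intro l h
      have h1 := ihd (l+1) (by omega)
      have h2 := hmono l (by omega)
      have h3 := hm2 l (by omega)
      have hf : Nat.fib (m l + 1) = Nat.fib (m l - 1) + Nat.fib (m l) :=
        fib_eq (m l + 1) (m l) (m l - 1) (by omega) (by omega)
      have hle : Nat.fib (m (l+1) + 1) ≤ Nat.fib (m l - 1) := Nat.fib_mono (by omega)
      rw [hxsucc l (by omega)]
      omega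
  have hxlt : ∀ l, l ≤ k → x l < Nat.fib (m l + 1) := fun l hl => hxltaux (k-l) l (by omega)
  -- the key recursion instantiated
  have star : ∀ i, 1 ≤ i → i ≤ k →
      (A (x (i-1)) : ℤ) = fInt (t i) * 2^(m (i-1) - 2 * t i)
        + (t i : ℤ) * A (x i) - ε i * A (x (i+1)) := by
    intro i hi1 hik
    have hm2i : 2 ≤ m i := hm2 i hik
    have hm2i1 : 2 ≤ m (i-1) := hm2 (i-1) (by omega)
    have hgapi : m i + 2 ≤ m (i-1) := hgap i hi1 hik
    have hy' : x (i+1) < Nat.fib (m i - 1) := by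
      rcases Nat.lt_or_ge i k with hlt | hge
      · have h1 := hxlt (i+1) (by omega)
        have h2 := hmono i hlt
        exact lt_of_lt_of_le h1 (Nat.fib_mono (by omega))
      · have : i = k := by omega
        subst this
        rw [hxk1]
        exact Nat.fib_pos.mpr (by omega)
    have hk := key (m i - 2) (m (i-1) - m i) (x (i+1)) (by omega)
      (by rw [show m i - 2 + 1 = m i - 1 by omega]; exact hy')
    rw [show m i - 2 + 2 + (m (i-1) - m i) = m (i-1) by omega,
        show m i - 2 + 2 = m i by omega] at hk
    have hxi : x i = Nat.fib (m i) + x (i+1) := hxsucc i hik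
    have hxi1 : x (i-1) = Nat.fib (m (i-1)) + (Nat.fib (m i) + x (i+1)) := by
      have := hxsucc (i-1) (by omega)
      rw [show i-1+1 = i by omega] at this
      rw [this, hxi]
    rw [hxi1, hxi, hk, ht i hi1 hik, hε i hi1 hik, ht i hi1 hik]
    have hc : ((m (i-1) - m i : ℕ) : ℤ) = (m (i-1) : ℤ) - (m i : ℤ) := by
      push_cast [Nat.cast_sub (by omega : m i ≤ m (i-1))]; ring
    rw [hc]
    ring
  constructor
  · -- main case k ≥ 1
    intro hk1
    have main : ∀ l, 1 ≤ l → l ≤ k →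
        (A H : ℤ) = a l * A (x l) - ε l * a (l-1) * A (x (l+1))
          + ∑ i ∈ Finset.Icc 1 l, a (i - 1) * fInt (t i) * 2 ^ (m (i - 1) - 2 * t i) := by
      intro l hl1
      induction l, hl1 using Nat.le_induction with
      | base =>
        intro _
        have hs := star 1 le_rfl hk1
        rw [hx0, hs, ha1 hk1]
        rw [show Finset.Icc 1 1 = {1} by rfl, Finset.sum_singleton,
            show (1:ℕ)-1 = 0 by rfl, ha0]
        ring
      | succ n hn ihn =>
        intro hnk
        have hih := ihn (by omega)
        have hs := star (n+1) (by omega) (by omega)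
        rw [show n+1-1 = n by omega] at hs
        have han := ha n hn (by omega)
        rw [show n+1-1 = n by omega]
        rw [Finset.sum_Icc_succ_top (by omega : 1 ≤ n+1), show n+1-1 = n by omega]
        rw [hih, hs, han]
        ring
    have hfin := main k hk1 le_rfl
    rw [hxk1, hxk, A_zero] at hfin
    have hAf : A (Nat.fib (m k)) = gN (m k) := by
      have := A_fib (m k - 2)
      rw [show m k - 2 + 2 = m k by omega] at this
      exact this
    rw [hAf] at hfin
    rw [floor_eq_gN, hfin]
    push_cast
    ring
  · -- case k = 0
    intro hk0
    subst hk0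
    have hHf : H = Nat.fib (m 0) := by
      rw [hexp]
      simp
    rw [hHf, floor_eq_gN]
    have := A_fib (m 0 - 2)
    rw [show m 0 - 2 + 2 = m 0 by omega] at this
    rw [this]
end

section
/- As m → ∞, A(2F_{m−1}) is asymptotic to (11/48)·2^m; that is, lim_{m→∞} A(2F_{m−1})/2^m = 11/48. Consequently lim_{m→∞} A(2F_{m−1})/(2F_{m−1})^λ = (11/24)·(√5/2)^λ. -/
open scoped BigOperators
open Filter Topology

/-- Count of subsets `T ⊆ [2, m]` with `∑_{i ∈ T} fib i ≤ B`. -/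
def Nc (m B : ℕ) : ℕ :=
  ((Finset.Icc 2 m).powerset.filter (fun T => ∑ i ∈ T, Nat.fib i ≤ B)).card

lemma filter_powerset_insert_card (s : Finset ℕ) (a : ℕ) (ha : a ∉ s) (B : ℕ) :
    ((insert a s).powerset.filter (fun T => ∑ i ∈ T, Nat.fib i ≤ B)).card
    = (s.powerset.filter (fun T => ∑ i ∈ T, Nat.fib i ≤ B)).card
    + (s.powerset.filter (fun T => ∑ i ∈ T, Nat.fib i + Nat.fib a ≤ B)).card := by
  classical
  rw [Finset.powerset_insert, Finset.filter_union]
  rw [Finset.card_union_of_disjoint]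
  · congr 1
    rw [Finset.filter_image]
    rw [Finset.card_image_of_injOn]
    · congr 1
      apply Finset.filter_congr
      intro T hT
      rw [Finset.mem_powerset] at hT
      have haT : a ∉ T := fun h => ha (hT h)
      rw [Finset.sum_insert haT]
      constructor <;> intro h <;> omega
    · intro T1 h1 T2 h2 h
      rw [Finset.mem_coe, Finset.mem_filter, Finset.mem_powerset] at h1 h2
      have ha1 : a ∉ T1 := fun hh => ha (h1.1 hh)
      have ha2 : a ∉ T2 := fun hh => ha (h2.1 hh)
      rw [← Finset.erase_insert ha1, ← Finset.erase_insert ha2, h]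
  · rw [Finset.disjoint_left]
    intro T hT1 hT2
    rw [Finset.mem_filter, Finset.mem_powerset] at hT1
    rw [Finset.mem_filter, Finset.mem_image] at hT2
    obtain ⟨T', _, rfl⟩ := hT2.1
    exact ha (hT1.1 (Finset.mem_insert_self a T'))

lemma Nc_succ (m B : ℕ) (hm : 1 ≤ m) :
    Nc (m+1) B = Nc m B
      + ((Finset.Icc 2 m).powerset.filter
          (fun T => ∑ i ∈ T, Nat.fib i + Nat.fib (m+1) ≤ B)).card := by
  unfold Nc
  rw [show Finset.Icc 2 (m+1) = insert (m+1) (Finset.Icc 2 m) by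
    rw [← Finset.insert_Icc_right_eq_Icc_add_one (by omega)]]
  exact filter_powerset_insert_card _ _ (by simp) B

lemma Nc_succ_le {m B : ℕ} (hm : 1 ≤ m) (hB : Nat.fib (m+1) ≤ B) :
    Nc (m+1) B = Nc m B + Nc m (B - Nat.fib (m+1)) := by
  rw [Nc_succ m B hm]
  congr 1
  apply congrArg Finset.card
  apply Finset.filter_congr
  intro T _
  constructor <;> intro h <;> omega

lemma Nc_succ_lt {m B : ℕ} (hm : 1 ≤ m) (hB : B < Nat.fib (m+1)) :
    Nc (m+1) B = Nc m B := by
  rw [Nc_succ m B hm]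
  convert (add_zero _)
  rw [Finset.card_eq_zero, Finset.filter_eq_empty_iff]
  intro T _
  omega

lemma sum_fib_Icc : ∀ m : ℕ, 1 ≤ m → (∑ i ∈ Finset.Icc 2 m, Nat.fib i) + 2 = Nat.fib (m+2) := by
  intro m hm
  induction m with
  | zero => omega
  | succ n ih =>
    rcases Nat.lt_or_ge n 1 with h | h
    · interval_cases n
      · decide
    · rw [show Finset.Icc 2 (n+1) = insert (n+1) (Finset.Icc 2 n) by
        rw [← Finset.insert_Icc_right_eq_Icc_add_one (by omega)]]
      rw [Finset.sum_insert (by simp)]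
      have h2 := ih h
      have h3 : Nat.fib (n+1+2) = Nat.fib (n+1) + Nat.fib (n+2) := Nat.fib_add_two
      omega

lemma Nc_full {m B : ℕ} (hm : 1 ≤ m) (hB : Nat.fib (m+2) ≤ B + 2) :
    Nc m B = 2^(m-1) := by
  unfold Nc
  rw [Finset.filter_true_of_mem, Finset.card_powerset, Nat.card_Icc]
  · congr 1
  · intro T hT
    rw [Finset.mem_powerset] at hT
    have h1 : ∑ i ∈ T, Nat.fib i ≤ ∑ i ∈ Finset.Icc 2 m, Nat.fib i :=
      Finset.sum_le_sum_of_subset hT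
    have h2 := sum_fib_Icc m hm
    omega

lemma Nc_zero (m : ℕ) : Nc m 0 = 1 := by
  unfold Nc
  rw [show ((Finset.Icc 2 m).powerset.filter (fun T => ∑ i ∈ T, Nat.fib i ≤ 0)) = {∅} from ?_]
  · exact Finset.card_singleton _
  · ext T
    simp only [Finset.mem_filter, Finset.mem_powerset, Finset.mem_singleton]
    constructor
    · rintro ⟨hsub, hsum⟩
      rw [Finset.eq_empty_iff_forall_notMem]
      intro i hi
      have h2 : 2 ≤ i := (Finset.mem_Icc.1 (hsub hi)).1
      have : 0 < Nat.fib i := Nat.fib_pos.2 (by omega)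
      have : Nat.fib i ≤ ∑ j ∈ T, Nat.fib j :=
        Finset.single_le_sum (fun j _ => Nat.zero_le _) hi
      omega
    · rintro rfl
      simp

/-- `w m = Nc m (fib (m+1))`. -/
def wseq (m : ℕ) : ℕ := Nc m (Nat.fib (m+1))

lemma fib_lt_fib {i j : ℕ} (hi : 2 ≤ i) (hij : i < j) : Nat.fib i < Nat.fib j :=
  lt_of_lt_of_le (Nat.fib_lt_fib_succ hi) (Nat.fib_mono hij)

lemma wseq_rec (k : ℕ) (hk : 1 ≤ k) : wseq (k+2) = 2^k + wseq k + 1 := by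
  have hfib3 : Nat.fib (k+3) = Nat.fib (k+1) + Nat.fib (k+2) := Nat.fib_add_two
  have h1 : wseq (k+2) = Nc (k+1) (Nat.fib (k+3)) + Nc (k+1) (Nat.fib (k+3) - Nat.fib (k+2)) := by
    unfold wseq
    exact Nc_succ_le (by omega)
      (by show Nat.fib (k+2) ≤ Nat.fib (k+3); exact Nat.fib_mono (by omega))
  have h2 : Nat.fib (k+3) - Nat.fib (k+2) = Nat.fib (k+1) := by omega
  have h3 : Nc (k+1) (Nat.fib (k+3)) = 2^k := by
    have := Nc_full (m := k+1) (B := Nat.fib (k+3)) (by omega)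
      (by show Nat.fib (k+3) ≤ Nat.fib (k+3) + 2; omega)
    simpa using this
  have h4 : Nc (k+1) (Nat.fib (k+1)) = wseq k + 1 := by
    have := Nc_succ_le (m := k) (B := Nat.fib (k+1)) hk le_rfl
    rw [this, Nat.sub_self, Nc_zero]
    rfl
  rw [h1, h2, h3, h4]
  omega

lemma wseq_formula : ∀ m : ℕ, 2 ≤ m → 6 * wseq m + 2 = 2^(m+1) + 3*m + m % 2 := by
  intro m
  induction m using Nat.strong_induction_on with
  | _ m ih =>
    intro hm
    rcases Nat.lt_or_ge m 4 with h | h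
    · interval_cases m
      · have h2 : wseq 2 = 2 := by decide
        rw [h2]; decide
      · have h3 : wseq 3 = 4 := by decide
        rw [h3]; decide
    · obtain ⟨k, rfl⟩ : ∃ k, m = k + 2 := ⟨m - 2, by omega⟩
      have hrec := wseq_rec k (by omega)
      have hih := ih k (by omega) (by omega)
      have hp1 : (2:ℕ)^(k+1) = 2 * 2^k := by ring
      have hp3 : (2:ℕ)^(k+2+1) = 8 * 2^k := by ring
      omega

lemma Nc_formula (k : ℕ) :
    48 * Nc (k+6) (2 * Nat.fib (k+5)) + 128
      = 11 * 2^(k+6) + 48*(k+6) + 16*((k+6) % 2) := by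
  have f4 : Nat.fib (k+6) = Nat.fib (k+4) + Nat.fib (k+5) := Nat.fib_add_two
  have f3 : Nat.fib (k+5) = Nat.fib (k+3) + Nat.fib (k+4) := Nat.fib_add_two
  have f2 : Nat.fib (k+4) = Nat.fib (k+2) + Nat.fib (k+3) := Nat.fib_add_two
  have hpos : 0 < Nat.fib (k+2) := Nat.fib_pos.2 (by omega)
  -- split off index k+6
  have h1 : Nc (k+6) (2 * Nat.fib (k+5))
      = Nc (k+5) (2 * Nat.fib (k+5)) + Nc (k+5) (2 * Nat.fib (k+5) - Nat.fib (k+6)) :=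
    Nc_succ_le (by omega) (by show Nat.fib (k+6) ≤ 2 * Nat.fib (k+5); omega)
  have h2 : 2 * Nat.fib (k+5) - Nat.fib (k+6) = Nat.fib (k+3) := by omega
  -- term 1 : split off index k+5
  have h3 : Nc (k+5) (2 * Nat.fib (k+5))
      = Nc (k+4) (2 * Nat.fib (k+5)) + Nc (k+4) (2 * Nat.fib (k+5) - Nat.fib (k+5)) :=
    Nc_succ_le (by omega) (by show Nat.fib (k+5) ≤ 2 * Nat.fib (k+5); omega)
  have h4 : 2 * Nat.fib (k+5) - Nat.fib (k+5) = Nat.fib (k+5) := by omega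
  have h5 : Nc (k+4) (2 * Nat.fib (k+5)) = 2^(k+3) := by
    have := Nc_full (m := k+4) (B := 2 * Nat.fib (k+5)) (by omega)
      (by show Nat.fib (k+6) ≤ 2 * Nat.fib (k+5) + 2; omega)
    simpa using this
  -- term 2 : cut twice then split
  have h6 : Nc (k+5) (Nat.fib (k+3)) = Nc (k+4) (Nat.fib (k+3)) :=
    Nc_succ_lt (by omega) (by show Nat.fib (k+3) < Nat.fib (k+5)
                              exact fib_lt_fib (by omega) (by omega))
  have h7 : Nc (k+4) (Nat.fib (k+3)) = Nc (k+3) (Nat.fib (k+3)) :=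
    Nc_succ_lt (by omega) (by show Nat.fib (k+3) < Nat.fib (k+4)
                              exact fib_lt_fib (by omega) (by omega))
  have h8 : Nc (k+3) (Nat.fib (k+3)) = Nc (k+2) (Nat.fib (k+3)) + Nc (k+2) 0 := by
    have := Nc_succ_le (m := k+2) (B := Nat.fib (k+3)) (by omega) le_rfl
    rw [this, Nat.sub_self]
  have h9 : Nc (k+2) 0 = 1 := Nc_zero _
  have hw4 : 6 * wseq (k+4) + 2 = 2^(k+5) + 3*(k+4) + (k+4) % 2 := wseq_formula _ (by omega)
  have hw2 : 6 * wseq (k+2) + 2 = 2^(k+3) + 3*(k+2) + (k+2) % 2 := wseq_formula _ (by omega)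
  have e4 : Nc (k+4) (Nat.fib (k+5)) = wseq (k+4) := rfl
  have e2 : Nc (k+2) (Nat.fib (k+3)) = wseq (k+2) := rfl
  have hp1 : (2:ℕ)^(k+5) = 4 * 2^(k+3) := by ring
  have hp2 : (2:ℕ)^(k+6) = 8 * 2^(k+3) := by ring
  rw [h1, h2, h3, h4, h5, h6, h7, h8, h9, e4, e2]
  rw [hp1] at hw4
  rw [hp2]
  generalize (2:ℕ)^(k+3) = P at hw4 hw2 ⊢
  obtain ⟨t, rfl | rfl⟩ := Nat.even_or_odd' k <;> omega

lemma fib_lt_fib' {i j : ℕ} (hi : 2 ≤ i) (hij : i < j) : Nat.fib i < Nat.fib j :=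
  lt_of_lt_of_le (Nat.fib_lt_fib_succ hi) (Nat.fib_mono hij)

lemma fib_injOn' {i j : ℕ} (hi : 2 ≤ i) (hj : 2 ≤ j) (h : Nat.fib i = Nat.fib j) : i = j := by
  rcases lt_trichotomy i j with hlt | he | hgt
  · exact absurd h (Nat.ne_of_lt (fib_lt_fib' hi hlt))
  · exact he
  · exact absurd h.symm (Nat.ne_of_lt (fib_lt_fib' hj hgt))

lemma mem_le_sum {S : Finset ℕ} {x : ℕ} (hx : x ∈ S) : x ≤ ∑ y ∈ S, y :=
  Finset.single_le_sum (f := fun y => y) (fun i _ => Nat.zero_le i) hx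

lemma subset_range_of_sum_le {S : Finset ℕ} {H : ℕ} (h : ∑ x ∈ S, x ≤ H) :
    S ⊆ Finset.range (H+1) := fun x hx => Finset.mem_range.2 (by
  have := mem_le_sum hx; omega)

lemma finite_fiber (n : ℕ) :
    Finite {S : Finset ℕ // (∀ x ∈ S, IsFibNum x) ∧ (∑ x ∈ S, x) = n} := by
  apply Finite.of_injective (β := ((Finset.range (n+1)).powerset : Finset (Finset ℕ)))
    (fun S => ⟨S.1, Finset.mem_powerset.2 (subset_range_of_sum_le (le_of_eq S.2.2))⟩)
  intro a b h
  have h2 := Subtype.ext_iff.mp h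
  exact Subtype.ext h2

lemma A_card (H : ℕ) :
    A H = Nat.card {S : Finset ℕ // (∀ x ∈ S, IsFibNum x) ∧ (∑ x ∈ S, x) ≤ H} := by
  classical
  haveI hfin : ∀ n : Fin (H+1),
      Finite {S : Finset ℕ // (∀ x ∈ S, IsFibNum x) ∧ (∑ x ∈ S, x) = (n:ℕ)} :=
    fun n => finite_fiber n
  let e : {S : Finset ℕ // (∀ x ∈ S, IsFibNum x) ∧ (∑ x ∈ S, x) ≤ H} ≃
      (Σ n : Fin (H+1), {S : Finset ℕ // (∀ x ∈ S, IsFibNum x) ∧ (∑ x ∈ S, x) = (n:ℕ)}) :=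
    { toFun := fun S => ⟨⟨∑ x ∈ S.1, x, Nat.lt_succ_of_le S.2.2⟩, ⟨S.1, S.2.1, rfl⟩⟩
      invFun := fun p => ⟨p.2.1, p.2.2.1, by
        have h := p.2.2.2
        have h2 := p.1.2
        omega⟩
      left_inv := fun S => rfl
      right_inv := by
        rintro ⟨⟨n, hn⟩, ⟨S, hP, hs⟩⟩
        simp only [Fin.val_mk] at hs
        subst hs
        rfl }
  rw [show Nat.card {S : Finset ℕ // (∀ x ∈ S, IsFibNum x) ∧ (∑ x ∈ S, x) ≤ H}
      = Nat.card (Σ n : Fin (H+1),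
        {S : Finset ℕ // (∀ x ∈ S, IsFibNum x) ∧ (∑ x ∈ S, x) = (n:ℕ)}) from Nat.card_congr e]
  haveI hft : ∀ n : Fin (H+1),
      Fintype {S : Finset ℕ // (∀ x ∈ S, IsFibNum x) ∧ (∑ x ∈ S, x) = (n:ℕ)} :=
    fun n => Fintype.ofFinite _
  rw [Nat.card_eq_fintype_card, Fintype.card_sigma]
  unfold A
  rw [← Fin.sum_univ_eq_sum_range (fun n => R n) (H+1)]
  apply Finset.sum_congr rfl
  intro n _
  rw [R, Nat.card_eq_fintype_card]

lemma card_bridge (m H : ℕ) (hm : 2 ≤ m) (hH : H < Nat.fib (m+1)) :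
    Nat.card {S : Finset ℕ // (∀ x ∈ S, IsFibNum x) ∧ (∑ x ∈ S, x) ≤ H} = Nc m H := by
  classical
  rw [Nc, ← Nat.card_eq_finsetCard]
  set 𝒯 := (Finset.Icc 2 m).powerset.filter (fun T => ∑ i ∈ T, Nat.fib i ≤ H) with h𝒯
  have hmem : ∀ T : Finset ℕ, T ∈ 𝒯 ↔ T ⊆ Finset.Icc 2 m ∧ ∑ i ∈ T, Nat.fib i ≤ H := by
    intro T
    rw [h𝒯, Finset.mem_filter, Finset.mem_powerset]
  have hinj : ∀ T : Finset ℕ, T ⊆ Finset.Icc 2 m →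
      (∀ x ∈ T, ∀ y ∈ T, Nat.fib x = Nat.fib y → x = y) := by
    intro T hT x hx y hy hxy
    exact fib_injOn' (Finset.mem_Icc.1 (hT hx)).1 (Finset.mem_Icc.1 (hT hy)).1 hxy
  have hsum_image : ∀ T : Finset ℕ, T ⊆ Finset.Icc 2 m →
      ∑ x ∈ T.image Nat.fib, x = ∑ i ∈ T, Nat.fib i := by
    intro T hT
    exact Finset.sum_image (hinj T hT)
  have fprop : ∀ T : Finset ℕ, T ∈ 𝒯 →
      (∀ x ∈ T.image Nat.fib, IsFibNum x) ∧ (∑ x ∈ T.image Nat.fib, x) ≤ H := by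
    intro T hT
    obtain ⟨hsub, hsum⟩ := (hmem T).1 hT
    constructor
    · intro x hx
      obtain ⟨i, hi, rfl⟩ := Finset.mem_image.1 hx
      have h2 : 2 ≤ i := (Finset.mem_Icc.1 (hsub hi)).1
      exact ⟨i, by omega, rfl⟩
    · rw [hsum_image T hsub]
      exact hsum
  have hsubdir : ∀ T1 T2 : Finset ℕ, T1 ⊆ Finset.Icc 2 m → T2 ⊆ Finset.Icc 2 m →
      T1.image Nat.fib = T2.image Nat.fib → T1 ⊆ T2 := by
    intro T1 T2 h1 h2 him i hi
    have : Nat.fib i ∈ T2.image Nat.fib := him ▸ Finset.mem_image_of_mem _ hi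
    obtain ⟨j, hj, hji⟩ := Finset.mem_image.1 this
    have : j = i := fib_injOn' (Finset.mem_Icc.1 (h2 hj)).1 (Finset.mem_Icc.1 (h1 hi)).1 hji
    exact this ▸ hj
  refine Nat.card_congr (Equiv.symm (Equiv.ofBijective
    (fun T : {T : Finset ℕ // T ∈ 𝒯} => (⟨T.1.image Nat.fib, fprop T.1 T.2⟩ :
      {S : Finset ℕ // (∀ x ∈ S, IsFibNum x) ∧ (∑ x ∈ S, x) ≤ H})) ⟨?_, ?_⟩))
  · -- injective
    intro T1 T2 h
    have him : T1.1.image Nat.fib = T2.1.image Nat.fib := congrArg Subtype.val h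
    have hs1 := ((hmem T1.1).1 T1.2).1
    have hs2 := ((hmem T2.1).1 T2.2).1
    exact Subtype.ext (Finset.Subset.antisymm (hsubdir _ _ hs1 hs2 him)
      (hsubdir _ _ hs2 hs1 him.symm))
  · -- surjective
    rintro ⟨S, hP, hle⟩
    have hex : ∀ x : ℕ, ∃ i, x ∈ S → (2 ≤ i ∧ i ≤ m ∧ Nat.fib i = x) := by
      intro x
      by_cases hxS : x ∈ S
      · obtain ⟨j, hj0, hjx⟩ := hP x hxS
        have hxle : x ≤ H := le_trans (mem_le_sum hxS) hle
        rcases Nat.lt_or_ge j 2 with hj2 | hj2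
        · refine ⟨2, fun _ => ⟨le_rfl, hm, ?_⟩⟩
          interval_cases j
          · rw [Nat.fib_one] at hjx
            rw [Nat.fib_two]
            exact hjx
        · refine ⟨j, fun _ => ⟨hj2, ?_, hjx⟩⟩
          by_contra hjm
          push_neg at hjm
          have : Nat.fib (m+1) ≤ Nat.fib j := Nat.fib_mono (by omega)
          omega
      · exact ⟨0, fun h => absurd h hxS⟩
    choose g hg using hex
    have hTsub : S.image g ⊆ Finset.Icc 2 m := by
      intro i hi
      obtain ⟨x, hx, rfl⟩ := Finset.mem_image.1 hi
      exact Finset.mem_Icc.2 ⟨(hg x hx).1, (hg x hx).2.1⟩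
    have himg : (S.image g).image Nat.fib = S := by
      rw [Finset.image_image]
      calc S.image (Nat.fib ∘ g) = S.image id := Finset.image_congr (fun x hx => (hg x hx).2.2)
        _ = S := Finset.image_id
    have hsum : ∑ i ∈ S.image g, Nat.fib i ≤ H := by
      rw [← hsum_image _ hTsub, himg]
      exact hle
    refine ⟨⟨S.image g, (hmem _).2 ⟨hTsub, hsum⟩⟩, ?_⟩
    exact Subtype.ext himg

lemma A_eq_Nc {m H : ℕ} (hm : 2 ≤ m) (hH : H < Nat.fib (m+1)) : A H = Nc m H :=
  (A_card H).trans (card_bridge m H hm hH)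

lemma A_formula (k : ℕ) :
    48 * A (2 * Nat.fib (k+5)) + 128 = 11 * 2^(k+6) + 48*(k+6) + 16*((k+6) % 2) := by
  have hlt : 2 * Nat.fib (k+5) < Nat.fib (k+7) := by
    have f1 : Nat.fib (k+7) = Nat.fib (k+5) + Nat.fib (k+6) := Nat.fib_add_two
    have f2 : Nat.fib (k+6) = Nat.fib (k+4) + Nat.fib (k+5) := Nat.fib_add_two
    have : 0 < Nat.fib (k+4) := Nat.fib_pos.2 (by omega)
    omega
  rw [A_eq_Nc (m := k+6) (by omega)
    (by show 2 * Nat.fib (k+5) < Nat.fib (k+7); exact hlt)]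
  exact Nc_formula k

/-- `A(2F_{m-1}) ~ (11/48)·2^m`, and hence `A(2F_{m-1})/(2F_{m-1})^λ → (11/24)(√5/2)^λ`. -/
theorem summatory_two_fib_asymptotic (φ lam : ℝ)
    (hφ : φ = (1 + Real.sqrt 5) / 2)
    (hlam : lam = Real.log 2 / Real.log φ) :
    Tendsto (fun m : ℕ => (A (2 * Nat.fib (m - 1)) : ℝ) / 2 ^ m) atTop
      (𝓝 (11 / 48)) ∧
    Tendsto (fun m : ℕ =>
        (A (2 * Nat.fib (m - 1)) : ℝ) / ((2 * Nat.fib (m - 1) : ℕ) : ℝ) ^ lam) atTop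
      (𝓝 ((11 / 24) * (Real.sqrt 5 / 2) ^ lam)) := by
  have hφg : φ = Real.goldenRatio := hφ
  have h5 : (0:ℝ) < Real.sqrt 5 := Real.sqrt_pos.2 (by norm_num)
  -- exact formula for A, in ℝ
  have hA : ∀ m : ℕ, 6 ≤ m → 48 * (A (2 * Nat.fib (m-1)) : ℝ) + 128
      = 11 * 2^m + 48*(m:ℝ) + 16*((m % 2 : ℕ):ℝ) := by
    intro m hm
    obtain ⟨k, rfl⟩ : ∃ k, m = k+6 := ⟨m-6, by omega⟩
    have h := A_formula k
    have h2 : ((48 * A (2 * Nat.fib (k+6-1)) + 128 : ℕ) : ℝ)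
        = ((11 * 2^(k+6) + 48*(k+6) + 16*((k+6) % 2) : ℕ) : ℝ) := by
      exact_mod_cast congrArg (Nat.cast (R := ℝ)) h
    push_cast at h2
    push_cast
    linarith
  -- first limit
  have herr : Tendsto
      (fun m : ℕ => (48*(m:ℝ) + 16*((m % 2 : ℕ):ℝ) - 128)/(48 * 2^m)) atTop (𝓝 0) := by
    apply squeeze_zero_norm (a := fun m : ℕ => ((m:ℝ)+3)/2^m)
    · intro m
      have hδ0 : (0:ℝ) ≤ ((m % 2 : ℕ):ℝ) := by positivity
      have hδ1 : ((m % 2 : ℕ):ℝ) ≤ 1 := by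
        have : m % 2 ≤ 1 := by omega
        exact_mod_cast this
      rw [Real.norm_eq_abs, abs_div,
        abs_of_pos (show (0:ℝ) < 48 * 2^m by positivity)]
      have h48 : |48*(m:ℝ) + 16*((m % 2 : ℕ):ℝ) - 128| ≤ 48*((m:ℝ)+3) := by
        rw [abs_le]
        constructor
        · nlinarith [(by positivity : (0:ℝ) ≤ (m:ℝ))]
        · nlinarith [(by positivity : (0:ℝ) ≤ (m:ℝ))]
      calc |48*(m:ℝ) + 16*((m % 2 : ℕ):ℝ) - 128| / (48 * 2^m)
          ≤ (48*((m:ℝ)+3)) / (48 * 2^m) := by gcongr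
        _ = ((m:ℝ)+3)/2^m := by
            rw [mul_div_mul_left _ _ (by norm_num : (48:ℝ) ≠ 0)]
    · have t1 : Tendsto (fun m : ℕ => (m:ℝ)^1/2^m) atTop (𝓝 0) :=
        tendsto_pow_const_div_const_pow_of_one_lt 1 one_lt_two
      have t2 : Tendsto (fun m : ℕ => (m:ℝ)^0/2^m) atTop (𝓝 0) :=
        tendsto_pow_const_div_const_pow_of_one_lt 0 one_lt_two
      have := t1.add (t2.const_mul (3:ℝ))
      rw [mul_zero, add_zero] at this
      apply this.congr
      intro m
      simp only [pow_one, pow_zero]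
      ring
  have h1 : Tendsto (fun m : ℕ => (A (2 * Nat.fib (m - 1)) : ℝ) / 2 ^ m) atTop
      (𝓝 (11 / 48)) := by
    have hmain : Tendsto
        (fun m : ℕ => 11/48 + (48*(m:ℝ) + 16*((m % 2 : ℕ):ℝ) - 128)/(48*2^m)) atTop
        (𝓝 (11/48 + 0)) := tendsto_const_nhds.add herr
    rw [add_zero] at hmain
    apply hmain.congr'
    filter_upwards [eventually_ge_atTop 6] with m hm
    have h := hA m hm
    have h2 : (2:ℝ)^m ≠ 0 := by positivity
    have hAeq : (A (2 * Nat.fib (m-1)) : ℝ)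
        = (11 * 2^m + 48*(m:ℝ) + 16*((m % 2 : ℕ):ℝ) - 128)/48 := by linarith
    rw [hAeq]
    field_simp
    ring
  refine ⟨h1, ?_⟩
  -- golden ratio rpow facts
  have hlam' : lam = Real.log 2 / Real.log Real.goldenRatio := by rw [hlam, hφg]
  have hlg : Real.log Real.goldenRatio ≠ 0 := ne_of_gt (Real.log_pos Real.one_lt_goldenRatio)
  have hlam2 : Real.goldenRatio ^ lam = 2 := by
    rw [Real.rpow_def_of_pos Real.goldenRatio_pos, hlam']
    rw [show Real.log Real.goldenRatio * (Real.log 2 / Real.log Real.goldenRatio) = Real.log 2 by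
      field_simp]
    exact Real.exp_log two_pos
  have hpowk : ∀ k : ℕ, ((Real.goldenRatio : ℝ) ^ k) ^ lam = 2^k := by
    intro k
    rw [← Real.rpow_natCast Real.goldenRatio k, ← Real.rpow_mul (le_of_lt Real.goldenRatio_pos),
      mul_comm, Real.rpow_mul (le_of_lt Real.goldenRatio_pos), hlam2, Real.rpow_natCast]
  set q : ℝ := Real.goldenConj / Real.goldenRatio with hqdef
  have hqabs : |q| < 1 := by
    rw [hqdef, abs_div, abs_of_pos Real.goldenRatio_pos, div_lt_one Real.goldenRatio_pos]
    have hψ : |Real.goldenConj| < 1 := abs_lt.2 ⟨Real.neg_one_lt_goldenConj, lt_trans Real.goldenConj_neg one_pos⟩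
    exact lt_trans hψ Real.one_lt_goldenRatio
  have hq0 : Tendsto (fun k : ℕ => q ^ k) atTop (𝓝 0) :=
    tendsto_pow_atTop_nhds_zero_of_abs_lt_one hqabs
  have hr1 : Tendsto (fun k : ℕ => 1 - q ^ k) atTop (𝓝 1) := by
    have := (tendsto_const_nhds (x := (1:ℝ)) (f := atTop)).sub hq0
    rw [sub_zero] at this
    exact this
  have hrlam : Tendsto (fun k : ℕ => (1 - q ^ k) ^ lam) atTop (𝓝 1) := by
    have hc : ContinuousAt (fun x : ℝ => x ^ lam) 1 :=
      Real.continuousAt_rpow_const 1 lam (Or.inl one_ne_zero)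
    have := hc.tendsto.comp hr1
    simpa [Real.one_rpow, Function.comp_def] using this
  have hrpos : ∀ k : ℕ, 1 ≤ k → 0 < 1 - q ^ k := by
    intro k hk
    have habs : |q ^ k| < 1 := by
      rw [abs_pow]
      exact pow_lt_one₀ (abs_nonneg q) hqabs (by omega)
    have := (abs_lt.1 habs).2
    linarith
  have hbinet : ∀ k : ℕ, ((2 * Nat.fib k : ℕ) : ℝ)
      = (2/Real.sqrt 5 * Real.goldenRatio^k) * (1 - q^k) := by
    intro k
    have hfib : (Nat.fib k : ℝ) = (Real.goldenRatio^k - Real.goldenConj^k)/Real.sqrt 5 :=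
      Real.coe_fib_eq k
    push_cast
    rw [hfib, hqdef]
    have hgne : (Real.goldenRatio:ℝ) ≠ 0 := ne_of_gt Real.goldenRatio_pos
    generalize Real.goldenRatio = g at hgne ⊢
    generalize Real.goldenConj = c
    rw [div_pow]
    field_simp
  have hb2 : ∀ k : ℕ, 1 ≤ k → ((2 * Nat.fib k : ℕ) : ℝ) ^ lam
      = (2/Real.sqrt 5)^lam * 2^k * (1 - q^k)^lam := by
    intro k hk
    rw [hbinet k]
    rw [Real.mul_rpow (by positivity) (le_of_lt (hrpos k hk))]
    rw [Real.mul_rpow (by positivity) (by positivity : (0:ℝ) ≤ Real.goldenRatio^k)]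
    rw [hpowk k]
  have h2' : Tendsto (fun m : ℕ => ((2 * Nat.fib (m-1) : ℕ) : ℝ) ^ lam / 2^m) atTop
      (𝓝 ((2/Real.sqrt 5)^lam / 2)) := by
    have base : Tendsto (fun m : ℕ => (2/Real.sqrt 5)^lam/2 * (1 - q^(m-1))^lam) atTop
        (𝓝 ((2/Real.sqrt 5)^lam/2 * 1)) :=
      (hrlam.comp (tendsto_sub_atTop_nat 1)).const_mul _
    rw [mul_one] at base
    apply base.congr'
    filter_upwards [eventually_ge_atTop 2] with m hm
    obtain ⟨k, rfl⟩ : ∃ k, m = k+1 := ⟨m-1, by omega⟩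
    have hk : 1 ≤ k := by omega
    simp only [Nat.add_sub_cancel]
    rw [hb2 k hk, pow_succ]
    have h2k : (2:ℝ)^k ≠ 0 := by positivity
    field_simp
  have hdenne : ((2/Real.sqrt 5:ℝ)^lam / 2) ≠ 0 := by positivity
  have hfinal := h1.div h2' hdenne
  have hval : (11/48 : ℝ) / ((2/Real.sqrt 5)^lam/2) = 11/24 * (Real.sqrt 5/2)^lam := by
    have hinv : (Real.sqrt 5/2)^lam = ((2/Real.sqrt 5)^lam)⁻¹ := by
      rw [← Real.inv_rpow (by positivity), inv_div]
    have hne : ((2/Real.sqrt 5:ℝ))^lam ≠ 0 := by positivity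
    rw [hinv]
    field_simp
    ring
  rw [hval] at hfinal
  apply hfinal.congr'
  filter_upwards [eventually_ge_atTop 2] with m hm
  have hfibpos : 0 < Nat.fib (m-1) := Nat.fib_pos.2 (by omega)
  have hb : (0:ℝ) < ((2 * Nat.fib (m-1) : ℕ):ℝ) := by
    have : 0 < 2 * Nat.fib (m-1) := by omega
    exact_mod_cast this
  have hblam : (0:ℝ) < ((2 * Nat.fib (m-1) : ℕ):ℝ)^lam := Real.rpow_pos_of_pos hb lam
  have h2m : ((2:ℝ)^m) ≠ 0 := by positivity
  rw [Pi.div_apply]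
  field_simp
end
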